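/- Let p^+, p^-, δ, u_b be positive reals, K_p = (p^- + δ)/p^+, r > 0, u_t ≥ 0 and β ≥ 0. Define α = p^+/(δ·(δ + p^- + p^+·r)). Then the relative sensitivity S = α / (1 + β·u_t + u_b/(δ·(K_p + r))) satisfies S ≤ 1/u_b. In particular, for fixed r bounded away from 0, S → 0 as u_b → ∞. -/

import Mathlib

/-- the relative sensitivity of the buffering controller is at most
`1/u_b`, and tends to `0` as `u_b → ∞`. -/
theorem stmt_8 (pp pm δ ub Kp r ut β : ℝ)
    (hpp : 0 < pp) (hpm : 0 < pm) (hδ : 0 < δ) (hub : 0 < ub)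
    (hKp : Kp = (pm + δ) / pp) (hr : 0 < r) (hut : 0 ≤ ut) (hβ : 0 ≤ β) :
    (pp / (δ * (δ + pm + pp * r))) / (1 + β * ut + ub / (δ * (Kp + r))) ≤ 1 / ub ∧
    Filter.Tendsto (fun ub' : ℝ =>
        (pp / (δ * (δ + pm + pp * r))) / (1 + β * ut + ub' / (δ * (Kp + r))))
      Filter.atTop (nhds 0) := by
  have hKpos : 0 < Kp := by rw [hKp]; positivity
  have hD : 0 < δ * (Kp + r) := by positivity
  have hden : 0 < δ * (δ + pm + pp * r) := by positivity
  have hα : pp / (δ * (δ + pm + pp * r)) = 1 / (δ * (Kp + r)) := by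
    have hppne : pp ≠ 0 := hpp.ne'
    rw [hKp, div_eq_div_iff hden.ne' (by positivity)]
    field_simp
    ring
  constructor
  · rw [hα]
    have h1 : ub / (δ * (Kp + r)) ≤ 1 + β * ut + ub / (δ * (Kp + r)) := by
      have : 0 ≤ 1 + β * ut := by positivity
      linarith
    have h2 : 0 < ub / (δ * (Kp + r)) := by positivity
    calc (1 / (δ * (Kp + r))) / (1 + β * ut + ub / (δ * (Kp + r)))
        ≤ (1 / (δ * (Kp + r))) / (ub / (δ * (Kp + r))) := by
          apply div_le_div_of_nonneg_left (by positivity) h2 h1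
      _ = 1 / ub := by field_simp
  · apply Filter.Tendsto.div_atTop tendsto_const_nhds
    apply Filter.tendsto_atTop_add_const_left
    exact Filter.tendsto_id.atTop_div_const hD
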